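/- (Limiting values of the power mean) Let N ≥ 1, let x : Fin N → ℝ with x_i > 0 for all i, and let λ : Fin N → ℝ with λ_i > 0 for all i and ∑ λ_i = 1. Define M_p(x) = (∑_i λ_i · x_i^p)^(1/p) for real p ≠ 0. Then: (a) M_p(x) tends to max_i x_i as p → +∞; (b) M_p(x) tends to min_i x_i as p → −∞; (c) M_p(x) tends to the weighted geometric mean ∏_i x_i^(λ_i) as p → 0 (limit along nonzero p). -/

import Mathlib

open Finset Filter

lemma powerMean_aux_top (N : ℕ) (hN : 1 ≤ N) (x w : Fin N → ℝ)
    (hx : ∀ i, 0 < x i) (hw : ∀ i, 0 < w i) (hsum : ∑ i, w i = 1) :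
    Tendsto (fun p : ℝ => (∑ i, w i * x i ^ p) ^ (1 / p)) atTop
      (nhds (⨆ i, x i)) := by
  haveI : Nonempty (Fin N) := ⟨⟨0, hN⟩⟩
  obtain ⟨j, hj⟩ := Finite.exists_max x
  have hsupr : (⨆ i, x i) = x j :=
    le_antisymm (ciSup_le hj) (le_ciSup (Set.Finite.bddAbove (Set.finite_range x)) j)
  rw [hsupr]
  have hxj : 0 < x j := hx j
  have hwj : 0 < w j := hw j
  -- lower bound function tends to x j
  have hlow : Tendsto (fun p : ℝ => w j ^ (1 / p) * x j) atTop (nhds (x j)) := by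
    have h1 : Tendsto (fun p : ℝ => (1 : ℝ) / p) atTop (nhds 0) := by
      simpa [one_div] using tendsto_inv_atTop_zero
    have h2 : Tendsto (fun p : ℝ => w j ^ (1 / p)) atTop (nhds 1) := by
      have := Filter.Tendsto.rpow (tendsto_const_nhds (x := w j) (f := atTop))
        h1 (Or.inl hwj.ne')
      simpa using this
    simpa using h2.mul_const (x j)
  refine tendsto_of_tendsto_of_tendsto_of_le_of_le' hlow tendsto_const_nhds ?_ ?_
  · filter_upwards [eventually_gt_atTop (0 : ℝ)] with p hp
    have hterm : w j * x j ^ p ≤ ∑ i, w i * x i ^ p := by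
      apply Finset.single_le_sum (f := fun i => w i * x i ^ p)
      · intro i _
        exact mul_nonneg (hw i).le (Real.rpow_nonneg (hx i).le p)
      · exact Finset.mem_univ j
    have := Real.rpow_le_rpow (z := 1 / p)
      (mul_nonneg hwj.le (Real.rpow_nonneg hxj.le p)) hterm (by positivity)
    calc w j ^ (1 / p) * x j = (w j * x j ^ p) ^ (1 / p) := by
          rw [Real.mul_rpow hwj.le (Real.rpow_nonneg hxj.le p),
            ← Real.rpow_mul hxj.le, mul_one_div_cancel hp.ne', Real.rpow_one]
      _ ≤ _ := this
  · filter_upwards [eventually_gt_atTop (0 : ℝ)] with p hp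
    have hsum' : ∑ i, w i * x i ^ p ≤ (x j) ^ p := by
      calc ∑ i, w i * x i ^ p ≤ ∑ i, w i * (x j) ^ p := by
            apply Finset.sum_le_sum
            intro i _
            exact mul_le_mul_of_nonneg_left
              (Real.rpow_le_rpow (hx i).le (hj i) hp.le) (hw i).le
        _ = (x j) ^ p := by rw [← Finset.sum_mul, hsum, one_mul]
    have := Real.rpow_le_rpow (z := 1 / p)
      (Finset.sum_nonneg fun i _ => mul_nonneg (hw i).le (Real.rpow_nonneg (hx i).le p))
      hsum' (by positivity)
    calc (∑ i, w i * x i ^ p) ^ (1 / p) ≤ ((x j) ^ p) ^ (1 / p) := this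
      _ = x j := by
          rw [← Real.rpow_mul hxj.le, mul_one_div_cancel hp.ne', Real.rpow_one]

/-- Limiting values of the weighted power mean `(∑ i, w i * x i ^ p) ^ (1/p)`:
as `p → +∞` it tends to the maximum, as `p → −∞` to the minimum, and as `p → 0`
(along nonzero `p`) to the weighted geometric mean.  `^` is real (rpow)
exponentiation. -/
theorem powerMean_limits (N : ℕ) (hN : 1 ≤ N) (x w : Fin N → ℝ)
    (hx : ∀ i, 0 < x i) (hw : ∀ i, 0 < w i) (hsum : ∑ i, w i = 1) :
    Tendsto (fun p : ℝ => (∑ i, w i * x i ^ p) ^ (1 / p)) atTop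
      (nhds (⨆ i, x i)) ∧
    Tendsto (fun p : ℝ => (∑ i, w i * x i ^ p) ^ (1 / p)) atBot
      (nhds (⨅ i, x i)) ∧
    Tendsto (fun p : ℝ => (∑ i, w i * x i ^ p) ^ (1 / p)) (nhdsWithin 0 {0}ᶜ)
      (nhds (∏ i, x i ^ w i)) := by
  haveI : Nonempty (Fin N) := ⟨⟨0, hN⟩⟩
  refine ⟨powerMean_aux_top N hN x w hx hw hsum, ?_, ?_⟩
  · -- atBot: reduce to atTop for the inverses
    have hx' : ∀ i, 0 < (x i)⁻¹ := fun i => inv_pos.2 (hx i)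
    have htop := powerMean_aux_top N hN (fun i => (x i)⁻¹) w hx' hw hsum
    -- identify the sup of inverses with the inverse of the inf
    obtain ⟨j, hj⟩ := Finite.exists_min x
    have hinf : (⨅ i, x i) = x j :=
      le_antisymm (ciInf_le (Set.Finite.bddBelow (Set.finite_range x)) j)
        (le_ciInf hj)
    have hsup : (⨆ i, (x i)⁻¹) = (x j)⁻¹ :=
      le_antisymm
        (ciSup_le fun i => inv_anti₀ (hx j) (hj i))
        (le_ciSup (Set.Finite.bddAbove (Set.finite_range fun i => (x i)⁻¹)) j)
    rw [hsup] at htop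
    have hinv : Tendsto (fun q : ℝ =>
        ((∑ i, w i * ((x i)⁻¹) ^ q) ^ (1 / q))⁻¹) atTop (nhds (x j)) := by
      have := htop.inv₀ (inv_ne_zero (hx j).ne')
      simpa using this
    have hcomp := hinv.comp tendsto_neg_atBot_atTop
    rw [hinf]
    refine hcomp.congr fun p => ?_
    simp only [Function.comp_apply]
    have hS : (0:ℝ) ≤ ∑ i, w i * ((x i)⁻¹) ^ (-p) := by
      apply Finset.sum_nonneg
      intro i _
      exact mul_nonneg (hw i).le (Real.rpow_nonneg (hx' i).le _)
    have hterm : ∀ i, ((x i)⁻¹ : ℝ) ^ (-p) = x i ^ p := by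
      intro i
      rw [Real.rpow_neg (hx' i).le, Real.inv_rpow (hx i).le, inv_inv]
    have hsame : ∑ i, w i * ((x i)⁻¹) ^ (-p) = ∑ i, w i * x i ^ p := by
      refine Finset.sum_congr rfl fun i _ => by rw [hterm i]
    have hS' : (0:ℝ) ≤ ∑ i, w i * x i ^ p := hsame ▸ hS
    rw [hsame, div_neg, Real.rpow_neg hS', inv_inv]
  · -- p → 0 case
    set L : ℝ := ∑ i, w i * Real.log (x i) with hL
    have hF : HasDerivAt (fun p : ℝ => ∑ i, w i * x i ^ p) L 0 := by
      have : HasDerivAt (fun p : ℝ => ∑ i, w i * Real.exp (Real.log (x i) * p)) L 0 := by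
        rw [hL]
        apply HasDerivAt.fun_sum
        intro i _
        have h1 : HasDerivAt (fun p : ℝ => Real.log (x i) * p) (Real.log (x i)) 0 := by
          simpa using (hasDerivAt_id (0:ℝ)).const_mul (Real.log (x i))
        have h2 := h1.exp
        simp only [mul_zero, Real.exp_zero, mul_one] at h2
        simpa [mul_comm] using h2.const_mul (w i)
      refine this.congr_of_eventuallyEq ?_
      filter_upwards with p
      refine Finset.sum_congr rfl fun i _ => ?_
      rw [Real.rpow_def_of_pos (hx i)]
    have hF0 : (∑ i, w i * x i ^ (0:ℝ)) = 1 := by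
      simp [hsum]
    have hG : HasDerivAt (fun p : ℝ => Real.log (∑ i, w i * x i ^ p)) L 0 := by
      have := hF.log (by rw [hF0]; norm_num)
      simpa [hF0, hsum] using this
    have hslope := hasDerivAt_iff_tendsto_slope.1 hG
    have hexp : Tendsto (fun p : ℝ =>
        Real.exp (slope (fun p : ℝ => Real.log (∑ i, w i * x i ^ p)) 0 p))
        (nhdsWithin 0 {0}ᶜ) (nhds (Real.exp L)) :=
      (Real.continuous_exp.continuousAt.tendsto).comp hslope
    have hfinal : Real.exp L = ∏ i, x i ^ w i := by
      rw [hL, Real.exp_sum]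
      refine Finset.prod_congr rfl fun i _ => ?_
      rw [Real.rpow_def_of_pos (hx i), mul_comm]
    rw [← hfinal]
    refine hexp.congr' ?_
    filter_upwards [self_mem_nhdsWithin] with p hp
    have hp0 : p ≠ 0 := hp
    have hSpos : (0:ℝ) < ∑ i, w i * x i ^ p := by
      apply Finset.sum_pos
      · intro i _
        exact mul_pos (hw i) (Real.rpow_pos_of_pos (hx i) p)
      · exact Finset.univ_nonempty
    rw [slope_def_field]
    rw [hF0]
    simp only [Real.log_one]
    rw [Real.rpow_def_of_pos hSpos]
    congr 1
    field_simp
    ring
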